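/- Let p be a prime and m ∈ ℕ with 0 < m < p/2, and consider the symmetric PI-RAPPOR randomizer with α₀ := m/p and α₁ := 1 − α₀, so that e^ε := (p − m)/m = (1 − α₀)/α₀. Let x₁, …, x_n be nonzero elements of ZMod p, c_j := #{i : x_i = j}, and let φ¹, …, φⁿ be independent with φ^i ~ M_{x_i}, with c̃_j := Σ_i (bool(φ^i₀ + j·φ^i₁) − α₀)/(α₁ − α₀). Then for every nonzero j ∈ ZMod p, E[c̃_j] = c_j and Var[c̃_j] = n·e^ε/(e^ε − 1)²; moreover, for any set J of nonzero elements of ZMod p with |J| = k, E[Σ_{j ∈ J} (c̃_j − c_j)²] = n·k·e^ε/(e^ε − 1)². -/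

import Mathlib

open Finset MeasureTheory

lemma aux_card_val (p m : ℕ) [NeZero p] (hmp : m ≤ p) :
    (Finset.univ.filter fun u : ZMod p => u.val < m).card = m := by
  conv_rhs => rw [← Finset.card_range m]
  refine Finset.card_bij' (fun u _ => u.val) (fun t _ => (t : ZMod p)) ?_ ?_ ?_ ?_
  · intro u hu; exact Finset.mem_range.mpr (Finset.mem_filter.mp hu).2
  · intro t ht
    simp only [Finset.mem_filter, Finset.mem_univ, true_and]
    rw [ZMod.val_cast_of_lt (lt_of_lt_of_le (Finset.mem_range.mp ht) hmp)]
    exact Finset.mem_range.mp ht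
  · intro u hu; simp [ZMod.natCast_val, ZMod.cast_id]
  · intro t ht; exact ZMod.val_cast_of_lt (lt_of_lt_of_le (Finset.mem_range.mp ht) hmp)

lemma aux_card_line (p m : ℕ) [NeZero p] (j : ZMod p) :
    (Finset.univ.filter fun s : ZMod p × ZMod p => (s.1 + j * s.2).val < m).card
      = (Finset.univ.filter fun u : ZMod p => u.val < m).card * p := by
  have h : ((Finset.univ.filter fun u : ZMod p => u.val < m)
        ×ˢ (Finset.univ : Finset (ZMod p))).card
      = (Finset.univ.filter fun u : ZMod p => u.val < m).card * p := by
    rw [Finset.card_product, Finset.card_univ, ZMod.card]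
  rw [← h]
  refine Finset.card_bij' (fun s _ => (s.1 + j * s.2, s.2))
    (fun t _ => (t.1 - j * t.2, t.2)) ?_ ?_ ?_ ?_
  · intro s hs
    simp only [Finset.mem_product, Finset.mem_filter, Finset.mem_univ, true_and, and_true]
    exact (Finset.mem_filter.mp hs).2
  · intro t ht
    simp only [Finset.mem_filter, Finset.mem_univ, true_and]
    have h2 : t.1 - j * t.2 + j * t.2 = t.1 := by ring
    rw [h2]
    exact (Finset.mem_filter.mp (Finset.mem_product.mp ht).1).2
  · intro s hs; ext <;> simp <;> ring
  · intro t ht; ext <;> simp <;> ring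

lemma aux_card_two (p m : ℕ) [Fact p.Prime] (j q : ZMod p) (hjq : j ≠ q) :
    (Finset.univ.filter fun s : ZMod p × ZMod p =>
        (s.1 + j * s.2).val < m ∧ (s.1 + q * s.2).val < m).card
      = (Finset.univ.filter fun u : ZMod p => u.val < m).card ^ 2 := by
  have hd : j - q ≠ 0 := sub_ne_zero.mpr hjq
  have h : ((Finset.univ.filter fun u : ZMod p => u.val < m)
        ×ˢ (Finset.univ.filter fun u : ZMod p => u.val < m)).card
      = (Finset.univ.filter fun u : ZMod p => u.val < m).card ^ 2 := by
    rw [Finset.card_product, sq]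
  rw [← h]
  refine Finset.card_bij' (fun s _ => (s.1 + j * s.2, s.1 + q * s.2))
    (fun t _ => (t.1 - j * ((t.1 - t.2) * (j - q)⁻¹), (t.1 - t.2) * (j - q)⁻¹)) ?_ ?_ ?_ ?_
  · intro s hs
    simp only [Finset.mem_product, Finset.mem_filter, Finset.mem_univ, true_and]
    exact (Finset.mem_filter.mp hs).2
  · intro t ht
    simp only [Finset.mem_filter, Finset.mem_univ, true_and]
    constructor
    · have h2 : t.1 - j * ((t.1 - t.2) * (j - q)⁻¹) + j * ((t.1 - t.2) * (j - q)⁻¹) = t.1 := by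
        ring
      rw [h2]
      exact (Finset.mem_filter.mp (Finset.mem_product.mp ht).1).2
    · have h2 : t.1 - j * ((t.1 - t.2) * (j - q)⁻¹) + q * ((t.1 - t.2) * (j - q)⁻¹) = t.2 := by
        field_simp
        ring
      rw [h2]
      exact (Finset.mem_filter.mp (Finset.mem_product.mp ht).2).2
  · intro s hs
    ext <;> (simp; try field_simp; try ring)
  · intro t ht
    ext <;> (simp; try field_simp; try ring)

set_option maxHeartbeats 1600000 in
theorem stmt_16 (p : ℕ) [Fact p.Prime] (m : ℕ) (hm0 : 0 < m) (hmp : 2 * m < p)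
    (α₀ α₁ : ℝ) (hα₀ : α₀ = (m : ℝ) / p) (hα₁ : α₁ = 1 - α₀)
    (eε : ℝ) (heε : eε = ((p : ℝ) - m) / m)
    (M : ZMod p → ZMod p × ZMod p → ℝ)
    (hM : ∀ j φ, M j φ =
      if (φ.1 + j * φ.2).val < m then α₁ / (m * p) else (1 - α₁) / ((p - m) * p))
    (n : ℕ) (x : Fin n → ZMod p) (hx : ∀ i, x i ≠ 0)
    {Ω : Type*} [MeasurableSpace Ω] (P : Measure Ω) [IsProbabilityMeasure P]
    [MeasurableSpace (ZMod p × ZMod p)] [MeasurableSingletonClass (ZMod p × ZMod p)]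
    (φ : Fin n → Ω → ZMod p × ZMod p) (hmeas : ∀ i, Measurable (φ i))
    (hjoint : ∀ f : Fin n → ZMod p × ZMod p,
      (P {ω | ∀ i, φ i ω = f i}).toReal = ∏ i, M (x i) (f i))
    (c : ZMod p → ℕ) (hc : ∀ j, c j = (univ.filter fun i => x i = j).card)
    (ctil : ZMod p → Ω → ℝ)
    (hctil : ∀ j ω, ctil j ω =
      ∑ i, ((if ((φ i ω).1 + j * (φ i ω).2).val < m then (1 : ℝ) else 0) - α₀) / (α₁ - α₀)) :
    (∀ j : ZMod p, j ≠ 0 →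
      (∫ ω, ctil j ω ∂P) = c j ∧
      (∫ ω, (ctil j ω - c j) ^ 2 ∂P) = n * eε / (eε - 1) ^ 2) ∧
    (∀ (J : Finset (ZMod p)) (k : ℕ), (0 : ZMod p) ∉ J → J.card = k →
      (∫ ω, ∑ j ∈ J, (ctil j ω - c j) ^ 2 ∂P) = n * k * eε / (eε - 1) ^ 2) := by
  classical
  subst hα₁
  have hp : p.Prime := Fact.out
  haveI : NeZero p := ⟨hp.ne_zero⟩
  have hple : m ≤ p := le_of_lt (lt_of_le_of_lt (Nat.le_mul_of_pos_left m (by norm_num)) hmp)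
  have hpR : (0:ℝ) < p := by exact_mod_cast hp.pos
  have hmR : (0:ℝ) < m := by exact_mod_cast hm0
  have h2m : 2*(m:ℝ) < p := by exact_mod_cast hmp
  have hpm : (m:ℝ) < p := by linarith
  have hpne : (p:ℝ) ≠ 0 := ne_of_gt hpR
  have hmne : (m:ℝ) ≠ 0 := ne_of_gt hmR
  have hpmne : ((p:ℝ) - m) ≠ 0 := ne_of_gt (by linarith)
  have hα₀pos : 0 < α₀ := by rw [hα₀]; positivity
  have hα₀half : α₀ < 1/2 := by rw [hα₀, div_lt_iff₀ hpR]; linarith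
  have hd : (1 - α₀) - α₀ ≠ 0 := by intro h; nlinarith
  -- indicator
  set bR : ZMod p → ZMod p × ZMod p → ℝ :=
    fun j s => if (s.1 + j * s.2).val < m then 1 else 0 with hbR
  have sumb : ∀ j : ZMod p, ∑ s : ZMod p × ZMod p, bR j s = (m:ℝ) * p := by
    intro j
    rw [hbR]
    rw [Finset.sum_boole, aux_card_line p m j, aux_card_val p m hple]
    push_cast; ring
  have sumbb : ∀ j q : ZMod p, j ≠ q →
      ∑ s : ZMod p × ZMod p, bR j s * bR q s = (m:ℝ) * m := by
    intro j q hjq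
    have h1 : ∀ s : ZMod p × ZMod p, bR j s * bR q s
        = if (s.1 + j*s.2).val < m ∧ (s.1 + q*s.2).val < m then (1:ℝ) else 0 := by
      intro s
      by_cases h1 : (s.1 + j*s.2).val < m <;> by_cases h2 : (s.1 + q*s.2).val < m <;>
        simp [hbR, h1, h2]
    simp_rw [h1]
    rw [Finset.sum_boole, aux_card_two p m j q hjq, aux_card_val p m hple]
    push_cast; ring
  have hM' : ∀ q : ZMod p, ∀ s, M q s
      = ((1-α₀)/(m*p) - α₀/(((p:ℝ)-m)*p)) * bR q s + α₀/(((p:ℝ)-m)*p) := by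
    intro q s
    rw [hM]
    by_cases h : (s.1 + q*s.2).val < m <;> simp [hbR, h] <;> ring
  have S0 : ∀ q : ZMod p, ∑ s : ZMod p × ZMod p, M q s = 1 := by
    intro q
    simp_rw [hM' q]
    rw [Finset.sum_add_distrib, ← Finset.mul_sum, sumb q, Finset.sum_const, Finset.card_univ,
      Fintype.card_prod, ZMod.card, nsmul_eq_mul]
    push_cast
    field_simp
    ring
  have S1 : ∀ q j : ZMod p, ∑ s : ZMod p × ZMod p, M q s * bR j s
      = if j = q then 1 - α₀ else α₀ := by
    intro q j
    by_cases hjq : j = q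
    · subst hjq
      rw [if_pos rfl]
      have hrw : ∀ s : ZMod p × ZMod p, M j s * bR j s = ((1-α₀)/(m*p)) * bR j s := by
        intro s
        rw [hM']
        by_cases h : (s.1 + j*s.2).val < m <;> simp [hbR, h] <;> ring
      simp_rw [hrw]
      rw [← Finset.mul_sum, sumb j]
      field_simp
    · rw [if_neg hjq]
      have hrw : ∀ s : ZMod p × ZMod p, M q s * bR j s
          = ((1-α₀)/(m*p) - α₀/(((p:ℝ)-m)*p)) * (bR j s * bR q s)
            + (α₀/(((p:ℝ)-m)*p)) * bR j s := by
        intro s; rw [hM']; ring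
      simp_rw [hrw]
      rw [Finset.sum_add_distrib, ← Finset.mul_sum, ← Finset.mul_sum, sumbb j q hjq, sumb j]
      rw [hα₀]
      field_simp
      ring
  -- estimator pieces
  set w : ZMod p → ZMod p × ZMod p → ℝ :=
    fun j s => (bR j s - α₀)/((1-α₀) - α₀) with hw
  set e : ZMod p → Fin n → ℝ := fun j i => if x i = j then 1 else 0 with he
  have Esite : ∀ (i : Fin n) (j : ZMod p),
      ∑ s : ZMod p × ZMod p, M (x i) s * w j s = e j i := by
    intro i j
    have hrw : ∀ s : ZMod p × ZMod p, M (x i) s * w j s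
        = (((1-α₀)-α₀)⁻¹) * (M (x i) s * bR j s) - (α₀*((1-α₀)-α₀)⁻¹) * M (x i) s := by
      intro s
      rw [hw]
      field_simp
    simp_rw [hrw]
    rw [Finset.sum_sub_distrib, ← Finset.mul_sum, ← Finset.mul_sum, S1 (x i) j, S0 (x i)]
    simp only [he]
    by_cases h : x i = j
    · rw [if_pos h.symm, if_pos h]
      field_simp
    · rw [if_neg (fun hh => h hh.symm), if_neg h]
      ring
  have Zsite : ∀ (i : Fin n) (j : ZMod p),
      ∑ s : ZMod p × ZMod p, M (x i) s * (w j s - e j i) = 0 := by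
    intro i j
    have h1 : ∀ s : ZMod p × ZMod p, M (x i) s * (w j s - e j i)
        = M (x i) s * w j s - e j i * M (x i) s := by intro s; ring
    simp_rw [h1]
    rw [Finset.sum_sub_distrib, ← Finset.mul_sum, Esite i j, S0 (x i)]
    ring
  have Vsite : ∀ (i : Fin n) (j : ZMod p),
      ∑ s : ZMod p × ZMod p, M (x i) s * (w j s - e j i)^2
        = α₀*(1-α₀)/((1-α₀)-α₀)^2 := by
    intro i j
    have hrw : ∀ s : ZMod p × ZMod p, M (x i) s * (w j s - e j i)^2
        = ((1 - 2*(α₀ + e j i*((1-α₀)-α₀)))/((1-α₀)-α₀)^2) * (M (x i) s * bR j s)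
          + ((α₀ + e j i*((1-α₀)-α₀))^2/((1-α₀)-α₀)^2) * M (x i) s := by
      intro s
      have hb : bR j s = 1 ∨ bR j s = 0 := by
        by_cases h : (s.1 + j*s.2).val < m
        · exact Or.inl (by simp [hbR, h])
        · exact Or.inr (by simp [hbR, h])
      have hww : w j s = (bR j s - α₀)/((1-α₀)-α₀) := rfl
      rcases hb with h | h <;> rw [hww, h] <;> field_simp <;> ring
    simp_rw [hrw]
    rw [Finset.sum_add_distrib, ← Finset.mul_sum, ← Finset.mul_sum, S1 (x i) j, S0 (x i)]
    by_cases h : x i = j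
    · have h1 : e j i = 1 := by simp only [he]; rw [if_pos h]
      rw [if_pos h.symm, h1]
      field_simp
      ring
    · have h1 : e j i = 0 := by simp only [he]; rw [if_neg h]
      rw [if_neg (fun hh => h hh.symm), h1]
      field_simp
      ring
  -- pushforward reduction
  set Φ : Ω → (Fin n → ZMod p × ZMod p) := fun ω i => φ i ω with hΦdef
  have hΦ : Measurable Φ := measurable_pi_lambda _ hmeas
  have hmap : ∀ f : Fin n → ZMod p × ZMod p,
      ((P.map Φ) {f}).toReal = ∏ i, M (x i) (f i) := by
    intro f
    rw [Measure.map_apply hΦ (MeasurableSet.singleton f)]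
    have h1 : Φ ⁻¹' {f} = {ω | ∀ i, φ i ω = f i} := by
      ext ω
      simp [hΦdef, funext_iff]
    rw [h1]
    exact hjoint f
  haveI : IsProbabilityMeasure (P.map Φ) := Measure.isProbabilityMeasure_map hΦ.aemeasurable
  have key : ∀ g : (Fin n → ZMod p × ZMod p) → ℝ,
      ∫ ω, g (Φ ω) ∂P = ∑ f : Fin n → ZMod p × ZMod p, (∏ i, M (x i) (f i)) * g f := by
    intro g
    have hg : Measurable g := measurable_of_countable g
    rw [← integral_map hΦ.aemeasurable hg.aestronglyMeasurable,
      integral_fintype (Integrable.of_finite)]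
    simp_rw [smul_eq_mul, measureReal_def, hmap]
  -- factorization
  have fact : ∀ v : Fin n → (ZMod p × ZMod p) → ℝ,
      ∑ f : Fin n → ZMod p × ZMod p, (∏ i, M (x i) (f i)) * (∏ i, v i (f i))
        = ∏ i, ∑ s : ZMod p × ZMod p, M (x i) s * v i s := by
    intro v
    rw [Finset.prod_univ_sum, Fintype.piFinset_univ]
    exact Finset.sum_congr rfl fun f _ => (Finset.prod_mul_distrib).symm
  have prod_one : ∀ (a : Fin n) (g1 : (ZMod p × ZMod p) → ℝ) (f : Fin n → ZMod p × ZMod p),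
      ∏ i, (if i = a then g1 else fun _ => (1:ℝ)) (f i) = g1 (f a) := by
    intro a g1 f
    rw [Finset.prod_eq_single a]
    · simp
    · intro b _ hb; simp [hb]
    · simp
  have sum_single : ∀ (a : Fin n) (g1 : (ZMod p × ZMod p) → ℝ),
      ∑ f : Fin n → ZMod p × ZMod p, (∏ i, M (x i) (f i)) * g1 (f a)
        = ∑ s : ZMod p × ZMod p, M (x a) s * g1 s := by
    intro a g1
    have h1 := fact (fun i => if i = a then g1 else fun _ => (1:ℝ))
    simp_rw [prod_one a g1] at h1
    rw [h1, Finset.prod_eq_single a]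
    · simp
    · intro b _ hb
      simp only [if_neg hb]
      simpa using S0 (x b)
    · simp
  have prod_two : ∀ (a b : Fin n), a ≠ b → ∀ (g1 g2 : (ZMod p × ZMod p) → ℝ)
      (f : Fin n → ZMod p × ZMod p),
      ∏ i, (if i = a then g1 else if i = b then g2 else fun _ => (1:ℝ)) (f i)
        = g1 (f a) * g2 (f b) := by
    intro a b hab g1 g2 f
    rw [← Finset.mul_prod_erase Finset.univ _ (Finset.mem_univ a),
        ← Finset.mul_prod_erase _ _ (Finset.mem_erase.mpr ⟨Ne.symm hab, Finset.mem_univ b⟩)]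
    have h1 : ∏ i ∈ (Finset.univ.erase a).erase b,
        (if i = a then g1 else if i = b then g2 else fun _ => (1:ℝ)) (f i) = 1 := by
      apply Finset.prod_eq_one
      intro i hi
      rw [Finset.mem_erase, Finset.mem_erase] at hi
      simp [hi.1, hi.2.1]
    rw [h1, mul_one]
    simp [Ne.symm hab]
  have sum_pair : ∀ (a b : Fin n), a ≠ b → ∀ g1 g2 : (ZMod p × ZMod p) → ℝ,
      ∑ f : Fin n → ZMod p × ZMod p, (∏ i, M (x i) (f i)) * (g1 (f a) * g2 (f b))
        = (∑ s : ZMod p × ZMod p, M (x a) s * g1 s)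
          * (∑ s : ZMod p × ZMod p, M (x b) s * g2 s) := by
    intro a b hab g1 g2
    have h1 := fact (fun i => if i = a then g1 else if i = b then g2 else fun _ => (1:ℝ))
    simp_rw [prod_two a b hab g1 g2] at h1
    rw [h1, ← Finset.mul_prod_erase Finset.univ _ (Finset.mem_univ a),
        ← Finset.mul_prod_erase _ _ (Finset.mem_erase.mpr ⟨Ne.symm hab, Finset.mem_univ b⟩)]
    have h2 : ∏ i ∈ (Finset.univ.erase a).erase b,
        (∑ s : ZMod p × ZMod p, M (x i) s *
          (if i = a then g1 else if i = b then g2 else fun _ => (1:ℝ)) s) = 1 := by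
      apply Finset.prod_eq_one
      intro i hi
      rw [Finset.mem_erase, Finset.mem_erase] at hi
      simp only [if_neg hi.2.1, if_neg hi.1, mul_one]
      exact S0 (x i)
    rw [h2, mul_one]
    simp [Ne.symm hab]
  -- pointwise identities
  have hctilΦ : ∀ (j : ZMod p) (ω : Ω), ctil j ω = ∑ i, w j (Φ ω i) := by
    intro j ω
    rw [hctil]
  have hce : ∀ j : ZMod p, (c j : ℝ) = ∑ i, e j i := by
    intro j
    rw [hc, Finset.card_filter]
    push_cast
    simp only [he]
  have hsq : ∀ (j : ZMod p) (ω : Ω), (ctil j ω - (c j:ℝ))^2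
      = (fun f : Fin n → ZMod p × ZMod p => (∑ i, (w j (f i) - e j i))^2) (Φ ω) := by
    intro j ω
    simp only
    rw [hctilΦ j ω, hce j, ← Finset.sum_sub_distrib]
  -- expectation
  have expe : ∀ j : ZMod p, (∫ ω, ctil j ω ∂P) = ∑ i, e j i := by
    intro j
    simp_rw [hctilΦ j]
    rw [key (fun f => ∑ i, w j (f i))]
    simp_rw [Finset.mul_sum]
    rw [Finset.sum_comm]
    exact Finset.sum_congr rfl fun a _ => by rw [sum_single a (w j)]; exact Esite a j
  -- variance
  have varsum : ∀ j : ZMod p, (∫ ω, (ctil j ω - (c j : ℝ))^2 ∂P)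
      = n * (α₀*(1-α₀)/((1-α₀)-α₀)^2) := by
    intro j
    simp_rw [hsq j]
    rw [key (fun f => (∑ i, (w j (f i) - e j i))^2)]
    have h3 : ∀ a b : Fin n, ∑ f : Fin n → ZMod p × ZMod p,
        (∏ i, M (x i) (f i)) * ((w j (f a) - e j a) * (w j (f b) - e j b))
        = if a = b then α₀*(1-α₀)/((1-α₀)-α₀)^2 else 0 := by
      intro a b
      by_cases hq : a = b
      · subst hq
        rw [if_pos rfl]
        have h4 : ∑ f : Fin n → ZMod p × ZMod p,
            (∏ i, M (x i) (f i)) * ((w j (f a) - e j a) * (w j (f a) - e j a))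
            = ∑ f : Fin n → ZMod p × ZMod p,
            (∏ i, M (x i) (f i)) * ((w j (f a) - e j a)^2) :=
          Finset.sum_congr rfl fun f _ => by rw [← sq]
        rw [h4]
        have h5 := sum_single a (fun s => (w j s - e j a)^2)
        rw [h5]
        exact Vsite a j
      · rw [if_neg hq]
        have h5 := sum_pair a b hq (fun s => w j s - e j a) (fun s => w j s - e j b)
        rw [Zsite a j, zero_mul] at h5
        exact h5
    calc ∑ f : Fin n → ZMod p × ZMod p,
          (∏ i, M (x i) (f i)) * (∑ i, (w j (f i) - e j i))^2
        = ∑ f : Fin n → ZMod p × ZMod p, ∑ a : Fin n, ∑ b : Fin n,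
            (∏ i, M (x i) (f i)) * ((w j (f a) - e j a) * (w j (f b) - e j b)) := by
          refine Finset.sum_congr rfl fun f _ => ?_
          rw [sq, Finset.sum_mul_sum]
          simp_rw [Finset.mul_sum]
      _ = ∑ a : Fin n, ∑ f : Fin n → ZMod p × ZMod p, ∑ b : Fin n,
            (∏ i, M (x i) (f i)) * ((w j (f a) - e j a) * (w j (f b) - e j b)) :=
          Finset.sum_comm
      _ = ∑ a : Fin n, ∑ b : Fin n, ∑ f : Fin n → ZMod p × ZMod p,
            (∏ i, M (x i) (f i)) * ((w j (f a) - e j a) * (w j (f b) - e j b)) :=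
          Finset.sum_congr rfl fun a _ => Finset.sum_comm
      _ = ∑ a : Fin n, ∑ b : Fin n,
            (if a = b then α₀*(1-α₀)/((1-α₀)-α₀)^2 else 0) :=
          Finset.sum_congr rfl fun a _ => Finset.sum_congr rfl fun b _ => h3 a b
      _ = ∑ _a : Fin n, α₀*(1-α₀)/((1-α₀)-α₀)^2 := by
          refine Finset.sum_congr rfl fun a _ => ?_
          simp
      _ = n * (α₀*(1-α₀)/((1-α₀)-α₀)^2) := by
          rw [Finset.sum_const, Finset.card_univ, Fintype.card_fin, nsmul_eq_mul]
  -- numeric identity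
  have hC : ((p:ℝ) - 2*m) ≠ 0 := ne_of_gt (by linarith)
  have hnum : α₀*(1-α₀)/((1-α₀)-α₀)^2 = eε/(eε-1)^2 := by
    have e2 : (1:ℝ) - (m:ℝ)/p - (m:ℝ)/p = ((p:ℝ)-2*m)/p := by field_simp; ring
    have e1 : (1:ℝ) - (m:ℝ)/p = ((p:ℝ)-m)/p := by field_simp
    have e3 : ((p:ℝ)-m)/m - 1 = ((p:ℝ)-2*m)/m := by field_simp; ring
    rw [hα₀, heε, e2, e1, e3]
    rw [div_pow, div_pow]
    field_simp
  refine ⟨fun j hj => ⟨?_, ?_⟩, fun J k hJ hk => ?_⟩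
  · rw [expe j]
    exact (hce j).symm
  · rw [varsum j, hnum]
    ring
  · have hint : ∀ j : ZMod p, Integrable (fun ω => (ctil j ω - (c j:ℝ))^2) P := by
      intro j
      have h1 : (fun ω => (ctil j ω - (c j:ℝ))^2)
          = (fun f : Fin n → ZMod p × ZMod p => (∑ i, (w j (f i) - e j i))^2) ∘ Φ := by
        funext ω
        exact hsq j ω
      rw [h1]
      exact (integrable_map_measure (measurable_of_countable _).aestronglyMeasurable
        hΦ.aemeasurable).mp Integrable.of_finite
    rw [integral_finset_sum J (fun j _ => hint j)]
    rw [Finset.sum_congr rfl fun j _ => varsum j]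
    rw [Finset.sum_const, hk, nsmul_eq_mul, hnum]
    ring
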